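/- Let V be the N×2 Vandermonde-type matrix with entries V_{n,1} = exp(j·2π·n·d·sin(θ)/λ) and V_{n,2} = exp(j·2π·n·d·sin(θ+Δ)/λ) for n = 0, ..., N-1. Then the two eigenvalues of V*V are N ± |sin(πNd(sinθ − sin(θ+Δ))/λ) / sin(πd(sinθ − sin(θ+Δ))/λ)|, provided sin(πd(sinθ − sin(θ+Δ))/λ) ≠ 0. -/

import Mathlib

open Matrix

theorem factor_aux (x : ℂ) : Complex.exp (Complex.I*(2*x)) - 1
    = Complex.exp (Complex.I*x) * (2*Complex.I*Complex.sin x) := by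
  rw [Complex.sin]
  have e1 : Complex.exp (Complex.I*x) * Complex.exp (x*Complex.I) = Complex.exp (Complex.I*(2*x)) := by
    rw [← Complex.exp_add]; ring_nf
  have e2 : Complex.exp (Complex.I*x) * Complex.exp (-x*Complex.I) = 1 := by
    rw [← Complex.exp_add]; ring_nf; exact Complex.exp_zero
  linear_combination -e1 + e2 - Complex.exp (Complex.I*x) *
    (Complex.exp (-x*Complex.I) - Complex.exp (x*Complex.I)) * Complex.I_sq

theorem geom_aux (N : ℕ) (A : ℝ) (hA : Real.sin A ≠ 0) :
    ∑ n : Fin N, Complex.exp (Complex.I * (2*A*(n:ℝ))) =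
      Complex.exp (Complex.I * ((N - 1 : ℝ) * A)) * (Real.sin (N*A) / Real.sin A) := by
  have hsA' : Complex.sin (A:ℂ) ≠ 0 := by
    rw [← Complex.ofReal_sin]; exact Complex.ofReal_ne_zero.mpr hA
  have hz1 : Complex.exp (Complex.I * (2*(A:ℂ))) - 1 ≠ 0 := by
    rw [factor_aux]
    exact mul_ne_zero (Complex.exp_ne_zero _)
      (mul_ne_zero (mul_ne_zero two_ne_zero Complex.I_ne_zero) hsA')
  have hz : Complex.exp (Complex.I * (2*(A:ℂ))) ≠ 1 := by
    intro h; exact hz1 (by rw [h]; ring)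
  have hpow : ∀ n : ℕ, Complex.exp (Complex.I * (2*A*(n:ℝ))) = Complex.exp (Complex.I*(2*(A:ℂ))) ^ n := by
    intro n
    rw [← Complex.exp_nat_mul]
    push_cast
    ring_nf
  calc ∑ n : Fin N, Complex.exp (Complex.I * (2*A*(n:ℝ)))
      = ∑ n ∈ Finset.range N, Complex.exp (Complex.I*(2*(A:ℂ))) ^ n := by
        rw [Finset.sum_range fun n => Complex.exp (Complex.I*(2*(A:ℂ))) ^ n]
        exact Finset.sum_congr rfl fun n _ => hpow n
    _ = (Complex.exp (Complex.I*(2*(A:ℂ))) ^ N - 1) / (Complex.exp (Complex.I*(2*(A:ℂ))) - 1) :=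
        geom_sum_eq hz N
    _ = Complex.exp (Complex.I * ((N - 1 : ℝ) * A)) * (Real.sin (N*A) / Real.sin A) := by
        rw [← Complex.exp_nat_mul]
        have h1 : (N:ℂ) * (Complex.I * (2*(A:ℂ))) = Complex.I * (2 * ((N:ℂ)*A)) := by ring
        rw [h1, factor_aux ((N:ℂ)*(A:ℂ)), factor_aux (A:ℂ)]
        have e3 : Complex.exp (Complex.I*(((N:ℂ)-1)*(A:ℂ))) * Complex.exp (Complex.I*(A:ℂ))
            = Complex.exp (Complex.I*((N:ℂ)*A)) := by
          rw [← Complex.exp_add]; ring_nf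
        rw [← e3]
        push_cast
        field_simp

/-- Lemma 4: the eigenvalues of `V*V` for the `N×2` Vandermonde steering matrix with
columns corresponding to directions `θ` and `θ+Δ` are
`N ± |sin(πNd(sinθ − sin(θ+Δ))/λ) / sin(πd(sinθ − sin(θ+Δ))/λ)|`. -/
theorem stmt4 (N : ℕ) (hN : 0 < N) (d lam θ Δ : ℝ) (hd : 0 < d) (hlam : 0 < lam)
    (hΔ : Δ ≠ 0)
    (hdenom : Real.sin (Real.pi * d * (Real.sin θ - Real.sin (θ + Δ)) / lam) ≠ 0)
    (V : Matrix (Fin N) (Fin 2) ℂ)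
    (hV1 : ∀ n : Fin N, V n 0 =
      Complex.exp (Complex.I * (2 * Real.pi * (n : ℝ) * d * Real.sin θ / lam)))
    (hV2 : ∀ n : Fin N, V n 1 =
      Complex.exp (Complex.I * (2 * Real.pi * (n : ℝ) * d * Real.sin (θ + Δ) / lam))) :
    ∀ μ : ℂ, μ ∈ spectrum ℂ (Vᴴ * V) ↔
      μ = (N : ℂ) + (|Real.sin (Real.pi * N * d * (Real.sin θ - Real.sin (θ + Δ)) / lam) /
            Real.sin (Real.pi * d * (Real.sin θ - Real.sin (θ + Δ)) / lam)| : ℝ) ∨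
      μ = (N : ℂ) - (|Real.sin (Real.pi * N * d * (Real.sin θ - Real.sin (θ + Δ)) / lam) /
            Real.sin (Real.pi * d * (Real.sin θ - Real.sin (θ + Δ)) / lam)| : ℝ) := by
  set A : ℝ := Real.pi * d * (Real.sin θ - Real.sin (θ + Δ)) / lam with hAdef
  have hNA : Real.pi * (N:ℝ) * d * (Real.sin θ - Real.sin (θ + Δ)) / lam = (N:ℝ) * A := by
    rw [hAdef]; ring
  rw [show (Real.pi * (N:ℝ) * d * (Real.sin θ - Real.sin (θ + Δ)) / lam) = (N:ℝ) * A from hNA]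
  set r : ℝ := Real.sin ((N:ℝ)*A) / Real.sin A with hrdef
  -- diagonal entries
  have h00 : (Vᴴ * V) 0 0 = (N:ℂ) := by
    rw [Matrix.mul_apply]
    have : ∀ n : Fin N, Vᴴ 0 n * V n 0 = 1 := by
      intro n
      rw [Matrix.conjTranspose_apply, hV1 n, Complex.star_def, ← Complex.exp_conj,
        ← Complex.exp_add]
      rw [show (starRingEnd ℂ) (Complex.I * (2 * Real.pi * (n : ℝ) * d * Real.sin θ / lam))
            + Complex.I * (2 * Real.pi * (n : ℝ) * d * Real.sin θ / lam) = 0 by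
        simp only [_root_.map_mul, map_div₀, Complex.conj_I, Complex.conj_ofReal, map_ofNat]; ring]
      exact Complex.exp_zero
    rw [Finset.sum_congr rfl fun n _ => this n]
    simp
  have h11 : (Vᴴ * V) 1 1 = (N:ℂ) := by
    rw [Matrix.mul_apply]
    have : ∀ n : Fin N, Vᴴ 1 n * V n 1 = 1 := by
      intro n
      rw [Matrix.conjTranspose_apply, hV2 n, Complex.star_def, ← Complex.exp_conj,
        ← Complex.exp_add]
      rw [show (starRingEnd ℂ) (Complex.I * (2 * Real.pi * (n : ℝ) * d * Real.sin (θ+Δ) / lam))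
            + Complex.I * (2 * Real.pi * (n : ℝ) * d * Real.sin (θ+Δ) / lam) = 0 by
        simp only [_root_.map_mul, map_div₀, Complex.conj_I, Complex.conj_ofReal, map_ofNat]; ring]
      exact Complex.exp_zero
    rw [Finset.sum_congr rfl fun n _ => this n]
    simp
  -- off diagonal
  have h10 : (Vᴴ * V) 1 0 = Complex.exp (Complex.I * ((N - 1 : ℝ) * A)) * (r:ℂ) := by
    rw [Matrix.mul_apply]
    have : ∀ n : Fin N, Vᴴ 1 n * V n 0 = Complex.exp (Complex.I * (2*A*(n:ℝ))) := by
      intro n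
      rw [Matrix.conjTranspose_apply, hV2 n, hV1 n, Complex.star_def, ← Complex.exp_conj,
        ← Complex.exp_add]
      congr 1
      simp only [_root_.map_mul, map_div₀, Complex.conj_I, Complex.conj_ofReal, map_ofNat]
      rw [hAdef]
      push_cast
      ring
    rw [Finset.sum_congr rfl fun n _ => this n, geom_aux N A hdenom, hrdef]
    push_cast
    ring
  have hmA : Real.sin (-A) ≠ 0 := by
    rw [Real.sin_neg]; exact neg_ne_zero.mpr hdenom
  have h01 : (Vᴴ * V) 0 1 = Complex.exp (Complex.I * ((N - 1 : ℝ) * (-A))) * (r:ℂ) := by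
    rw [Matrix.mul_apply]
    have : ∀ n : Fin N, Vᴴ 0 n * V n 1
        = Complex.exp (Complex.I * (2 * ((-A : ℝ) : ℂ) * ((n : ℝ) : ℂ))) := by
      intro n
      rw [Matrix.conjTranspose_apply, hV1 n, hV2 n, Complex.star_def, ← Complex.exp_conj,
        ← Complex.exp_add]
      congr 1
      simp only [_root_.map_mul, map_div₀, Complex.conj_I, Complex.conj_ofReal, map_ofNat]
      rw [hAdef]
      push_cast
      ring
    rw [Finset.sum_congr rfl fun n _ => this n, geom_aux N (-A) hmA,
      show ((N:ℝ) * -A) = -((N:ℝ)*A) by ring, Real.sin_neg, Real.sin_neg]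
    push_cast [hrdef]
    ring
  intro μ
  rw [spectrum.mem_iff, Matrix.isUnit_iff_isUnit_det, isUnit_iff_ne_zero, not_ne_iff]
  have hee : Complex.exp (Complex.I * ((N - 1 : ℝ) * (-A))) *
      Complex.exp (Complex.I * ((N - 1 : ℝ) * A)) = 1 := by
    rw [← Complex.exp_add, show Complex.I * (((N - 1 : ℝ)) * (-A) : ℂ) +
      Complex.I * (((N - 1 : ℝ)) * A : ℂ) = 0 by push_cast; ring]
    exact Complex.exp_zero
  have hdet : ((algebraMap ℂ (Matrix (Fin 2) (Fin 2) ℂ)) μ - Vᴴ * V).det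
      = (μ - (N:ℂ))^2 - (r:ℂ)^2 := by
    rw [Matrix.det_fin_two]
    simp only [Matrix.sub_apply, Matrix.algebraMap_matrix_apply,
      show ((0:Fin 2) = 0) = True by simp, show ((1:Fin 2) = 1) = True by simp,
      show ((0:Fin 2) = 1) = False by simp, show ((1:Fin 2) = 0) = False by simp,
      if_true, if_false, Algebra.algebraMap_self_apply]
    rw [h00, h11, h01, h10]
    linear_combination (- (r:ℂ)^2) * hee
  rw [hdet]
  constructor
  · intro h
    have h2 : (μ - (N:ℂ) - r) * (μ - (N:ℂ) + r) = 0 := by linear_combination h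
    rcases mul_eq_zero.mp h2 with h3 | h3
    · rcases abs_cases r with ⟨ha, _⟩ | ⟨ha, _⟩
      · left; rw [ha]; linear_combination h3
      · right; rw [ha]; push_cast; linear_combination h3
    · rcases abs_cases r with ⟨ha, _⟩ | ⟨ha, _⟩
      · right; rw [ha]; linear_combination h3
      · left; rw [ha]; push_cast; linear_combination h3
  · intro h
    have habs : ((|r| : ℝ) : ℂ)^2 = (r:ℂ)^2 := by
      rcases abs_cases r with ⟨ha, _⟩ | ⟨ha, _⟩ <;> rw [ha] <;> push_cast <;> ring
    rcases h with h | h <;> rw [h] <;> linear_combination habs
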